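/- Let B be the differential operator Bf(t) = f'(t) + (2πia/b) t f(t). For f ∈ S(ℝ), B(𝓕_A f)(ω) = (2πi/b)(aω + dω + Ω) 𝓕_A(f)(ω) − (2πi/b) 𝓕_A(t f(t))(ω), where Ω = bq − dp. -/

import Mathlib

open MeasureTheory Complex

noncomputable def SAFT (a b d p q : ℝ) (f : ℝ → ℂ) (ω : ℝ) : ℂ :=
  (1 / Real.sqrt |b|) *
    ∫ t : ℝ, f t *
      Complex.exp ((Real.pi * Complex.I / b) *
        (a * t ^ 2 + 2 * p * t - 2 * ω * t + 2 * (b * q - d * p) * ω + d * ω ^ 2))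

private lemma norm_exp_aux (b r : ℝ) :
    ‖Complex.exp ((Real.pi * Complex.I / b) * (r:ℂ))‖ = 1 := by
  rw [show ((Real.pi : ℂ) * Complex.I / b) * (r:ℂ) = ((Real.pi * r / b : ℝ) : ℂ) * Complex.I by
    push_cast; ring]
  exact Complex.norm_exp_ofReal_mul_I _

private lemma norm_coeff_aux (b r : ℝ) :
    ‖((Real.pi : ℂ) * Complex.I / b * (r:ℂ))‖ = Real.pi / |b| * |r| := by
  rw [norm_mul, norm_div, norm_mul, Complex.norm_I, mul_one]
  simp [Real.norm_eq_abs, abs_of_pos Real.pi_pos]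

theorem B_of_SAFT (a b c d p q : ℝ) (hb : b ≠ 0) (hA : a * d - b * c = 1)
    (f : SchwartzMap ℝ ℂ) (ω : ℝ) :
    deriv (SAFT a b d p q (⇑f)) ω +
        (2 * Real.pi * Complex.I * a / b) * ω * SAFT a b d p q (⇑f) ω =
      (2 * Real.pi * Complex.I / b) * (a * ω + d * ω + (b * q - d * p)) *
          SAFT a b d p q (⇑f) ω -
        (2 * Real.pi * Complex.I / b) * SAFT a b d p q (fun t => t * f t) ω := by
  have hπ : (0:ℝ) < Real.pi := Real.pi_pos
  set Ω : ℝ := b * q - d * p with hΩ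
  set E : ℝ → ℝ → ℝ := fun x t => a * t ^ 2 + 2 * p * t - 2 * x * t + 2 * Ω * x + d * x ^ 2
    with hE
  set K : ℝ → ℝ → ℂ := fun x t =>
    f t * Complex.exp ((Real.pi * Complex.I / b) * (E x t : ℂ)) with hK
  set K' : ℝ → ℝ → ℂ := fun x t =>
    f t * (Complex.exp ((Real.pi * Complex.I / b) * (E x t : ℂ)) *
      ((Real.pi * Complex.I / b) * ((-2 * t + 2 * Ω + 2 * d * x : ℝ) : ℂ))) with hK'
  have hKnorm : ∀ x t, ‖K x t‖ = ‖f t‖ := by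
    intro x t
    rw [hK]
    rw [norm_mul, norm_exp_aux, mul_one]
  have hcont : ∀ x, Continuous (K x) :=
    fun x => f.continuous.mul (Complex.continuous_exp.comp (by fun_prop))
  have hKint : ∀ x, Integrable (K x) := by
    intro x
    refine Integrable.mono' (f.integrable (μ := volume)).norm
      (hcont x).aestronglyMeasurable ?_
    filter_upwards with t using le_of_eq (hKnorm x t)
  have hderiv : ∀ t x, HasDerivAt (fun x => K x t) (K' x t) x := by
    intro t x
    have hE' : HasDerivAt (fun x : ℝ => E x t) (-2 * t + 2 * Ω + 2 * d * x) x := by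
      have h := ((((hasDerivAt_id x).const_mul (2*t)).neg.add
        ((hasDerivAt_id x).const_mul (2*Ω))).add
        ((hasDerivAt_pow 2 x).const_mul d)).const_add (a * t ^ 2 + 2 * p * t)
      refine HasDerivAt.congr_deriv (h.congr_of_eventuallyEq (Filter.Eventually.of_forall fun y => ?_)) ?_
      · simp only [hE, id, Pi.add_apply, Pi.neg_apply]; ring
      · rw [show (2:ℕ) - 1 = 1 from rfl]; push_cast; ring
    have h2 : HasDerivAt (fun x : ℝ => ((Real.pi : ℂ) * Complex.I / b) * ((E x t : ℝ) : ℂ))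
        ((Real.pi * Complex.I / b) * ((-2 * t + 2 * Ω + 2 * d * x : ℝ) : ℂ)) x := by
      simpa using (hE'.ofReal_comp).const_mul ((Real.pi : ℂ) * Complex.I / b)
    exact (h2.cexp).const_mul (f t)
  set C : ℝ := 2 * Real.pi / |b| with hC
  have hCpos : 0 < C := by positivity
  set bound : ℝ → ℝ := fun t => C * (|Ω| + |d| * (|ω| + 1)) * ‖f t‖ + C * (‖t‖ * ‖f t‖)
    with hbound
  have hbound_int : Integrable bound := by
    refine Integrable.add ((f.integrable (μ := volume)).norm.const_mul _) ?_
    refine ((f.integrable_pow_mul volume 1).const_mul C).congr ?_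
    filter_upwards with t
    simp [pow_one]
  have hK'le : ∀ t, ∀ x ∈ Metric.ball ω 1, ‖K' x t‖ ≤ bound t := by
    intro t x hx
    have hx1 : |x| ≤ |ω| + 1 := by
      have h := Metric.mem_ball.mp hx
      rw [Real.dist_eq] at h
      have h2 := abs_sub_abs_le_abs_sub x ω
      linarith
    have h1 : ‖K' x t‖ = ‖f t‖ * (Real.pi / |b| * |(-2 * t + 2 * Ω + 2 * d * x : ℝ)|) := by
      rw [hK', norm_mul, norm_mul, norm_exp_aux, one_mul, norm_coeff_aux]
    rw [h1]
    have h2 : |(-2 * t + 2 * Ω + 2 * d * x : ℝ)| ≤ 2 * |t| + 2 * |Ω| + 2 * |d| * (|ω| + 1) := by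
      have h3 := abs_add_le (-2 * t + 2 * Ω : ℝ) (2 * d * x)
      have h4 := abs_add_le (-2 * t : ℝ) (2 * Ω)
      have h5 : |2 * d * x| ≤ 2 * |d| * (|ω| + 1) := by
        rw [abs_mul, abs_mul, _root_.abs_two]
        have h6 : (0:ℝ) ≤ 2 * |d| := by positivity
        exact mul_le_mul_of_nonneg_left hx1 h6
      have h7 : |(-2 : ℝ) * t| = 2 * |t| := by rw [abs_mul]; norm_num
      have h8 : |(2 : ℝ) * Ω| = 2 * |Ω| := by rw [abs_mul]; norm_num
      calc |(-2 * t + 2 * Ω + 2 * d * x : ℝ)| ≤ |(-2 * t + 2 * Ω : ℝ)| + |2 * d * x| := h3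
        _ ≤ (|(-2 : ℝ) * t| + |(2:ℝ) * Ω|) + (2 * |d| * (|ω| + 1)) := add_le_add h4 h5
        _ = 2 * |t| + 2 * |Ω| + 2 * |d| * (|ω| + 1) := by rw [h7, h8]
    have hfn : (0:ℝ) ≤ ‖f t‖ := norm_nonneg _
    have hb' : (0:ℝ) < Real.pi / |b| := by positivity
    calc ‖f t‖ * (Real.pi / |b| * |(-2 * t + 2 * Ω + 2 * d * x : ℝ)|)
        ≤ ‖f t‖ * (Real.pi / |b| * (2 * |t| + 2 * |Ω| + 2 * |d| * (|ω| + 1))) :=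
          mul_le_mul_of_nonneg_left (mul_le_mul_of_nonneg_left h2 hb'.le) hfn
      _ = bound t := by
          simp only [hbound, hC, Real.norm_eq_abs]
          field_simp
          ring
  have hmain := hasDerivAt_integral_of_dominated_loc_of_deriv_le (μ := volume)
    (F := fun x t => K x t) (F' := fun x t => K' x t) (x₀ := ω) (bound := bound)
    (Metric.ball_mem_nhds ω one_pos)
    (Filter.Eventually.of_forall fun x => (hcont x).aestronglyMeasurable)
    (hKint ω)
    (by
      apply Continuous.aestronglyMeasurable
      simp only [hK']
      exact f.continuous.mul ((Complex.continuous_exp.comp (by fun_prop)).mul (by fun_prop)))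
    (Filter.Eventually.of_forall fun t => hK'le t)
    hbound_int
    (Filter.Eventually.of_forall fun t x _ => hderiv t x)
  obtain ⟨hK'int, hD⟩ := hmain
  have harg : ∀ (x t : ℝ), ((Real.pi : ℂ) * Complex.I / b) *
      ((a:ℂ) * t ^ 2 + 2 * p * t - 2 * (x:ℂ) * t + 2 * ((b:ℂ) * q - (d:ℂ) * p) * x
        + (d:ℂ) * (x:ℂ) ^ 2)
      = ((Real.pi : ℂ) * Complex.I / b) * ((E x t : ℝ) : ℂ) := by
    intro x t
    congr 1
    push_cast [hE, hΩ]
    ring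
  have hSAFT : ∀ x, SAFT a b d p q (⇑f) x = (1 / Real.sqrt |b|) * ∫ t : ℝ, K x t := by
    intro x
    unfold SAFT
    congr 1
    refine integral_congr_ae (Filter.Eventually.of_forall fun t => ?_)
    simp only [hK, harg]
  have hSAFT2 : SAFT a b d p q (fun t => t * f t) ω
      = (1 / Real.sqrt |b|) * ∫ t : ℝ, (t : ℂ) * K ω t := by
    unfold SAFT
    congr 1
    refine integral_congr_ae (Filter.Eventually.of_forall fun t => ?_)
    simp only [hK]
    rw [harg, mul_assoc]
  have hderivSAFT : deriv (SAFT a b d p q (⇑f)) ω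
      = (1 / Real.sqrt |b|) * ∫ t : ℝ, K' ω t := by
    have heq : SAFT a b d p q (⇑f) = fun x => (1 / Real.sqrt |b|) * ∫ t : ℝ, K x t :=
      funext hSAFT
    rw [heq, deriv_const_mul _ hD.differentiableAt, hD.deriv]
  have htKint : Integrable (fun t : ℝ => (t : ℂ) * K ω t) := by
    refine Integrable.mono' (f.integrable_pow_mul volume 1)
      ((Complex.continuous_ofReal.mul (hcont ω)).aestronglyMeasurable) ?_
    filter_upwards with t
    rw [norm_mul, hKnorm]
    simp
  have hsplit : (∫ t : ℝ, K' ω t)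
      = ((2 * Real.pi * Complex.I / b) * (d * ω + Ω)) * (∫ t : ℝ, K ω t)
        - (2 * Real.pi * Complex.I / b) * ∫ t : ℝ, (t : ℂ) * K ω t := by
    have heq : ∀ t : ℝ, K' ω t = ((2 * Real.pi * Complex.I / b) * (d * ω + Ω)) * K ω t
        - (2 * Real.pi * Complex.I / b) * ((t : ℂ) * K ω t) := by
      intro t
      simp only [hK', hK]
      push_cast
      ring
    rw [integral_congr_ae (Filter.Eventually.of_forall heq),
      integral_sub ((hKint ω).const_mul _) (htKint.const_mul _),
      integral_const_mul, integral_const_mul]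
  rw [hderivSAFT, hsplit, hSAFT ω, hSAFT2]
  have hbC : (b : ℂ) ≠ 0 := by exact_mod_cast hb
  push_cast [hΩ]
  field_simp
  ring
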